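/- Let U, V, W be open ℝ₊-connected subsets of X. Then the set U ∪ (V ∩ ℝ₊(U ∩ V)) ∪ (W ∩ ℝ₊(U ∩ W)) is ℝ₊-connected. (Lemma 1.17 of the paper.) -/
import Mathlib


/-- The multiplicative group of positive real numbers. -/
abbrev Rpos : Type := {t : ℝ // 0 < t}

/-- The saturation `ℝ₊S = {t • x : t ∈ ℝ₊, x ∈ S}` of a set `S`. -/
def RposSat {X : Type*} [SMul Rpos X] (S : Set X) : Set X :=
  {y | ∃ (t : Rpos) (x : X), x ∈ S ∧ t • x = y}

/-- A set `S` is `ℝ₊`-connected if its intersection with every orbit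
`ℝ₊x = {t • x : t ∈ ℝ₊}` is connected or empty (i.e. preconnected). -/
def RposConnected {X : Type*} [TopologicalSpace X] [SMul Rpos X] (S : Set X) : Prop :=
  ∀ x : X, IsPreconnected (S ∩ Set.range (fun t : Rpos => t • x))

/-- Every orbit is contractible: for each `x`, either `x` is a fixed point of the action,
or the orbit map `t ↦ t • x` is a homeomorphism of `ℝ₊` onto the orbit `ℝ₊x` endowed with
its subspace topology (i.e. it is a topological embedding). -/
def OrbitHyp (X : Type*) [TopologicalSpace X] [SMul Rpos X] : Prop :=
  ∀ x : X, (∀ t : Rpos, t • x = x) ∨ Topology.IsEmbedding (fun t : Rpos => t • x)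

/-- Lemma 1.17: if `U, V, W` are open `ℝ₊`-connected subsets of `X`, then
`U ∪ (V ∩ ℝ₊(U ∩ V)) ∪ (W ∩ ℝ₊(U ∩ W))` is `ℝ₊`-connected. -/
theorem stmt_0 {X : Type*} [TopologicalSpace X] [MulAction Rpos X] [ContinuousSMul Rpos X]
    (horb : OrbitHyp X) (U V W : Set X)
    (hUo : IsOpen U) (hVo : IsOpen V) (hWo : IsOpen W)
    (hUc : RposConnected U) (hVc : RposConnected V) (hWc : RposConnected W) :
    RposConnected (U ∪ (V ∩ RposSat (U ∩ V)) ∪ (W ∩ RposSat (U ∩ W))) := by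
  intro x
  set b : Set X := Set.range (fun t : Rpos => t • x) with hb
  -- b is closed under the action
  have hbsmul : ∀ (t : Rpos) (y : X), y ∈ b → t • y ∈ b := by
    rintro t y ⟨s, rfl⟩
    exact ⟨t * s, (mul_smul t s x).symm ▸ rfl⟩
  -- saturation meets the orbit only if the set does
  have hsat_empty : ∀ S : Set X, S ∩ b = ∅ → RposSat S ∩ b = ∅ := by
    intro S hS
    ext y
    simp only [Set.mem_inter_iff, Set.mem_empty_iff_false, iff_false, not_and]
    rintro ⟨t, z, hz, rfl⟩ hyb
    have hz' : z ∈ b := by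
      have := hbsmul t⁻¹ _ hyb
      rwa [inv_smul_smul] at this
    exact absurd (Set.mem_inter hz hz') (by rw [hS]; exact Set.notMem_empty z)
  -- if the set meets the orbit, the saturation contains the orbit
  have hsat_full : ∀ S : Set X, (S ∩ b).Nonempty → b ⊆ RposSat S := by
    rintro S ⟨z, hzS, s, rfl⟩ y ⟨t, rfl⟩
    exact ⟨t * s⁻¹, s • x, hzS, by rw [smul_smul, mul_assoc, inv_mul_cancel, mul_one]⟩
  set A : Set X := V ∩ RposSat (U ∩ V) with hA
  set B : Set X := W ∩ RposSat (U ∩ W) with hB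
  have hsplit : (U ∪ A ∪ B) ∩ b = ((U ∩ b) ∪ (A ∩ b)) ∪ (B ∩ b) := by
    rw [Set.union_inter_distrib_right, Set.union_inter_distrib_right]
  rw [show (U ∪ A ∪ B) ∩ b = ((U ∩ b) ∪ (A ∩ b)) ∪ (B ∩ b) from hsplit]
  by_cases hU : (U ∩ b).Nonempty
  · -- first handle A
    have hstep1 : IsPreconnected ((U ∩ b) ∪ (A ∩ b)) := by
      by_cases hUV : ((U ∩ V) ∩ b).Nonempty
      · have hAb : A ∩ b = V ∩ b := by
          apply Set.Subset.antisymm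
          · rintro y ⟨⟨hyV, _⟩, hyb⟩; exact ⟨hyV, hyb⟩
          · rintro y ⟨hyV, hyb⟩; exact ⟨⟨hyV, hsat_full _ hUV hyb⟩, hyb⟩
        rw [hAb]
        obtain ⟨z, hzUV, hzb⟩ := hUV
        exact IsPreconnected.union z ⟨hzUV.1, hzb⟩ ⟨hzUV.2, hzb⟩ (hUc x) (hVc x)
      · have hAb : A ∩ b = ∅ := by
          apply Set.eq_empty_of_subset_empty
          rw [← hsat_empty (U ∩ V) (Set.not_nonempty_iff_eq_empty.mp hUV)]
          rintro y ⟨⟨_, hy⟩, hyb⟩; exact ⟨hy, hyb⟩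
        rw [hAb, Set.union_empty]
        exact hUc x
    -- then B
    by_cases hUW : ((U ∩ W) ∩ b).Nonempty
    · have hBb : B ∩ b = W ∩ b := by
        apply Set.Subset.antisymm
        · rintro y ⟨⟨hyW, _⟩, hyb⟩; exact ⟨hyW, hyb⟩
        · rintro y ⟨hyW, hyb⟩; exact ⟨⟨hyW, hsat_full _ hUW hyb⟩, hyb⟩
      rw [hBb]
      obtain ⟨z, hzUW, hzb⟩ := hUW
      exact IsPreconnected.union z (Or.inl ⟨hzUW.1, hzb⟩) ⟨hzUW.2, hzb⟩ hstep1 (hWc x)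
    · have hBb : B ∩ b = ∅ := by
        apply Set.eq_empty_of_subset_empty
        rw [← hsat_empty (U ∩ W) (Set.not_nonempty_iff_eq_empty.mp hUW)]
        rintro y ⟨⟨_, hy⟩, hyb⟩; exact ⟨hy, hyb⟩
      rw [hBb, Set.union_empty]
      exact hstep1
  · -- U misses the orbit: everything is empty
    have hUb : U ∩ b = ∅ := Set.not_nonempty_iff_eq_empty.mp hU
    have hUVb : (U ∩ V) ∩ b = ∅ := by
      apply Set.eq_empty_of_subset_empty
      rw [← hUb]; rintro y ⟨⟨h1, _⟩, h2⟩; exact ⟨h1, h2⟩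
    have hUWb : (U ∩ W) ∩ b = ∅ := by
      apply Set.eq_empty_of_subset_empty
      rw [← hUb]; rintro y ⟨⟨h1, _⟩, h2⟩; exact ⟨h1, h2⟩
    have hAb : A ∩ b = ∅ := by
      apply Set.eq_empty_of_subset_empty
      rw [← hsat_empty (U ∩ V) hUVb]
      rintro y ⟨⟨_, hy⟩, hyb⟩; exact ⟨hy, hyb⟩
    have hBb : B ∩ b = ∅ := by
      apply Set.eq_empty_of_subset_empty
      rw [← hsat_empty (U ∩ W) hUWb]
      rintro y ⟨⟨_, hy⟩, hyb⟩; exact ⟨hy, hyb⟩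
    rw [hUb, hAb, hBb, Set.union_empty, Set.union_empty]
    exact isPreconnected_empty
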